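/- Under the class-dependent label noise model, assume there is a measurable map x ↦ y_x such that for μ-almost every x, y_x maximizes y ↦ η_y(x) and y_x also maximizes ỹ ↦ η^ρ_{ỹ}(x). Then the Bayes error rate of the noisy distribution satisfies the lower bound R*_ρ ≥ R* + (1 − R*) · min_{y∈Y} ρ(y) − R* · max_{y', y'' ∈ Y, y' ≠ y''} t_{y', y''}. -/

import Mathlib

open MeasureTheory

/-- Lower bound on the Bayes error rate under class-dependent label noise:
`R*_ρ ≥ R* + (1 − R*)·min_y ρ(y) − R*·max_{y'≠y''} t_{y',y''}`. -/
theorem ber_class_dependent_noise_lower_bound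
    {X : Type*} [MeasurableSpace X] (μ : Measure X) [IsProbabilityMeasure μ]
    {Y : Type*} [Fintype Y] [Nonempty Y] [DecidableEq Y] [MeasurableSpace Y] [MeasurableSingletonClass Y]
    (hC : 2 ≤ Fintype.card Y)
    (hne : ((Finset.univ : Finset (Y × Y)).filter fun p => p.1 ≠ p.2).Nonempty)
    (η : X → Y → ℝ)
    (hmeas : ∀ y, Measurable fun x => η x y)
    (hnn : ∀ x y, 0 ≤ η x y)
    (hsum : ∀ x, ∑ y, η x y = 1)
    (t : Y → Y → ℝ)
    (ht0 : ∀ y' y, 0 ≤ t y' y) (ht1 : ∀ y' y, t y' y ≤ 1)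
    (htsum : ∀ y, ∑ y', t y' y = 1)
    (ηρ : X → Y → ℝ)
    (hηρ : ∀ x y', ηρ x y' = ∑ y, t y' y * η x y)
    (yx : X → Y) (hyx : Measurable yx)
    (hmax : ∀ᵐ x ∂μ, (∀ y, η x y ≤ η x (yx x)) ∧ ∀ y', ηρ x y' ≤ ηρ x (yx x))
    (Rstar Rρ : ℝ)
    (hR : Rstar = ∫ x, (1 - ⨆ y, η x y) ∂μ)
    (hRρ : Rρ = ∫ x, (1 - ⨆ y', ηρ x y') ∂μ) :
    Rρ ≥ Rstar
          + (1 - Rstar) * (Finset.univ.inf' Finset.univ_nonempty fun y => 1 - t y y)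
          - Rstar * (((Finset.univ : Finset (Y × Y)).filter fun p => p.1 ≠ p.2).sup' hne
              fun p => t p.1 p.2) := by
  set m : ℝ := Finset.univ.inf' Finset.univ_nonempty fun y => 1 - t y y with hm
  set T : ℝ := ((Finset.univ : Finset (Y × Y)).filter fun p => p.1 ≠ p.2).sup' hne
      fun p => t p.1 p.2 with hT
  have hm_le : ∀ y, m ≤ 1 - t y y := fun y =>
    Finset.inf'_le _ (Finset.mem_univ y)
  have hT_ge : ∀ y' y'', y' ≠ y'' → t y' y'' ≤ T := by
    intro y' y'' h
    exact Finset.le_sup' (f := fun p : Y × Y => t p.1 p.2)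
      (by simp [Finset.mem_filter, h] : (y', y'') ∈ _)
  -- bounds on η and ηρ
  have hη_le_one : ∀ x y, η x y ≤ 1 := by
    intro x y
    calc η x y ≤ ∑ y', η x y' := Finset.single_le_sum (fun y' _ => hnn x y') (Finset.mem_univ y)
    _ = 1 := hsum x
  have hηρ_nn : ∀ x y', 0 ≤ ηρ x y' := by
    intro x y'
    rw [hηρ]
    exact Finset.sum_nonneg fun y _ => mul_nonneg (ht0 y' y) (hnn x y)
  have hηρ_le_one : ∀ x y', ηρ x y' ≤ 1 := by
    intro x y'
    rw [hηρ]
    calc ∑ y, t y' y * η x y ≤ ∑ y, η x y := by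
          refine Finset.sum_le_sum fun y _ => ?_
          nlinarith [ht0 y' y, ht1 y' y, hnn x y]
    _ = 1 := hsum x
  -- measurability of G and Gρ
  have hG_meas : Measurable fun x => η x (yx x) := by
    have h : (fun x => η x (yx x)) = fun x => ∑ y, if yx x = y then η x y else 0 := by
      funext x; rw [Finset.sum_ite_eq]; simp
    rw [h]
    exact Finset.measurable_sum _ fun y _ =>
      Measurable.ite (hyx (measurableSet_singleton y)) (hmeas y) measurable_const
  have hηρ_meas : ∀ y', Measurable fun x => ηρ x y' := by
    intro y'
    have h : (fun x => ηρ x y') = fun x => ∑ y, t y' y * η x y := by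
      funext x; exact hηρ x y'
    rw [h]
    exact Finset.measurable_sum _ fun y _ => (hmeas y).const_mul _
  have hGρ_meas : Measurable fun x => ηρ x (yx x) := by
    have h : (fun x => ηρ x (yx x)) = fun x => ∑ y, if yx x = y then ηρ x y else 0 := by
      funext x; rw [Finset.sum_ite_eq]; simp
    rw [h]
    exact Finset.measurable_sum _ fun y _ =>
      Measurable.ite (hyx (measurableSet_singleton y)) (hηρ_meas y) measurable_const
  -- integrability
  have hG_int : Integrable (fun x => η x (yx x)) μ := by
    refine (integrable_const (1:ℝ)).mono' hG_meas.aestronglyMeasurable ?_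
    filter_upwards with x
    rw [Real.norm_eq_abs, abs_le]
    exact ⟨by linarith [hnn x (yx x)], hη_le_one x (yx x)⟩
  have hGρ_int : Integrable (fun x => ηρ x (yx x)) μ := by
    refine (integrable_const (1:ℝ)).mono' hGρ_meas.aestronglyMeasurable ?_
    filter_upwards with x
    rw [Real.norm_eq_abs, abs_le]
    exact ⟨by linarith [hηρ_nn x (yx x)], hηρ_le_one x (yx x)⟩
  -- a.e. identification of the sups
  have hae : ∀ᵐ x ∂μ, (1 - ⨆ y, η x y) = 1 - η x (yx x) := by
    filter_upwards [hmax] with x hx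
    have := le_antisymm (ciSup_le hx.1)
      (le_ciSup (Set.Finite.bddAbove (Set.finite_range _)) (yx x))
    rw [this]
  have haeρ : ∀ᵐ x ∂μ, (1 - ⨆ y', ηρ x y') = 1 - ηρ x (yx x) := by
    filter_upwards [hmax] with x hx
    have := le_antisymm (ciSup_le hx.2)
      (le_ciSup (Set.Finite.bddAbove (Set.finite_range _)) (yx x))
    rw [this]
  set IG : ℝ := ∫ x, η x (yx x) ∂μ with hIG
  set IGρ : ℝ := ∫ x, ηρ x (yx x) ∂μ with hIGρ
  have hRstar' : Rstar = 1 - IG := by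
    rw [hR, integral_congr_ae hae, integral_sub (integrable_const 1) hG_int,
      integral_const]
    simp [hIG]
  have hRρ' : Rρ = 1 - IGρ := by
    rw [hRρ, integral_congr_ae haeρ, integral_sub (integrable_const 1) hGρ_int,
      integral_const]
    simp [hIGρ]
  -- pointwise key inequality
  have hpt : ∀ᵐ x ∂μ, ηρ x (yx x) ≤ (1 - m - T) * η x (yx x) + T := by
    filter_upwards with x
    set b := yx x
    have hsplit : ∑ y, t b y * η x y
        = t b b * η x b + ∑ y ∈ Finset.univ.erase b, t b y * η x y :=
      (Finset.add_sum_erase _ _ (Finset.mem_univ b)).symm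
    have h1 : t b b * η x b ≤ (1 - m) * η x b :=
      mul_le_mul_of_nonneg_right (by linarith [hm_le b]) (hnn x b)
    have h2 : ∑ y ∈ Finset.univ.erase b, t b y * η x y
        ≤ T * (1 - η x b) := by
      calc ∑ y ∈ Finset.univ.erase b, t b y * η x y
          ≤ ∑ y ∈ Finset.univ.erase b, T * η x y := by
            refine Finset.sum_le_sum fun y hy => ?_
            exact mul_le_mul_of_nonneg_right
              (hT_ge b y (Ne.symm (Finset.ne_of_mem_erase hy))) (hnn x y)
        _ = T * ∑ y ∈ Finset.univ.erase b, η x y := by rw [Finset.mul_sum]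
        _ = T * (1 - η x b) := by
            rw [Finset.sum_erase_eq_sub (Finset.mem_univ b), hsum x]
    calc ηρ x b = ∑ y, t b y * η x y := hηρ x b
    _ = t b b * η x b + ∑ y ∈ Finset.univ.erase b, t b y * η x y := hsplit
    _ ≤ (1 - m) * η x b + T * (1 - η x b) := add_le_add h1 h2
    _ = (1 - m - T) * η x b + T := by ring
  -- integrate
  have hint2 : Integrable (fun x => (1 - m - T) * η x (yx x) + T) μ :=
    (hG_int.const_mul _).add (integrable_const T)
  have hkey : IGρ ≤ (1 - m - T) * IG + T := by
    have h := integral_mono_ae hGρ_int hint2 hpt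
    rwa [integral_add (hG_int.const_mul _) (integrable_const T),
      integral_const_mul, integral_const, probReal_univ, smul_eq_mul, one_mul] at h
  rw [hRstar', hRρ']
  nlinarith [hkey]
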